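/- Let m ≥ 2 be an even integer. If x₁, x₂, λ are real numbers satisfying x₂^{m-1} = λx₁ and −x₁^{m-1} = λx₂, then x₁ = 0 and x₂ = 0. Consequently, the order-m tensor A of format 2×⋯×2 whose only nonzero entries are a_{12⋯2} = 1 and a_{21⋯1} = −1 has no real eigenpair. -/
import Mathlib


open Finset

/-- The contraction `A x^{m-1}` of an order-`m` real tensor of format `n × ⋯ × n`
with the vector `x ∈ ℝⁿ`. -/
noncomputable def tApplyR (m n : ℕ) (A : (Fin m → Fin n) → ℝ) (x : Fin n → ℝ) :
    Fin n → ℝ :=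
  fun j => ∑ i : Fin (m - 1) → Fin n,
    A (fun k => if hk : (k : ℕ) = 0 then j
        else i ⟨(k : ℕ) - 1, by have := k.isLt; omega⟩) * ∏ l, x (i l)

/-- The order-`m` tensor of format `2 × ⋯ × 2` whose only nonzero entries are
`a_{1 2 ⋯ 2} = 1` and `a_{2 1 ⋯ 1} = -1`. -/
noncomputable def skewTensor (m : ℕ) : (Fin m → Fin 2) → ℝ :=
  fun i =>
    if ∀ k : Fin m, i k = if (k : ℕ) = 0 then 0 else 1 then 1
    else if ∀ k : Fin m, i k = if (k : ℕ) = 0 then 1 else 0 then -1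
    else 0

lemma cond_iff (m : ℕ) (hm : 2 ≤ m) (i : Fin (m - 1) → Fin 2) (j v w : Fin 2) :
    (∀ k : Fin m, (if hk : (k : ℕ) = 0 then j
        else i ⟨(k : ℕ) - 1, by have := k.isLt; omega⟩) = if (k : ℕ) = 0 then v else w)
      ↔ (j = v ∧ i = fun _ => w) := by
  constructor
  · intro hall
    refine ⟨?_, ?_⟩
    · have := hall ⟨0, by omega⟩
      simpa using this
    · funext l
      have := hall ⟨(l : ℕ) + 1, by have := l.isLt; omega⟩
      simpa using this
  · rintro ⟨rfl, rfl⟩ k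
    by_cases hk : (k : ℕ) = 0 <;> simp [hk]

lemma skew_eval0 (m : ℕ) (hm : 2 ≤ m) (i : Fin (m - 1) → Fin 2) :
    skewTensor m (fun k => if hk : (k : ℕ) = 0 then (0 : Fin 2)
        else i ⟨(k : ℕ) - 1, by have := k.isLt; omega⟩)
      = if i = fun _ => 1 then 1 else 0 := by
  unfold skewTensor
  simp only [cond_iff m hm]
  by_cases h : i = fun _ => 1 <;> simp [h]

lemma skew_eval1 (m : ℕ) (hm : 2 ≤ m) (i : Fin (m - 1) → Fin 2) :
    skewTensor m (fun k => if hk : (k : ℕ) = 0 then (1 : Fin 2)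
        else i ⟨(k : ℕ) - 1, by have := k.isLt; omega⟩)
      = if i = fun _ => 0 then -1 else 0 := by
  unfold skewTensor
  simp only [cond_iff m hm]
  by_cases h : i = fun _ => 0 <;> simp [h]

/-- For even `m ≥ 2`: the system `x₂^{m-1} = λ x₁`, `-x₁^{m-1} = λ x₂` has only the
trivial real solution, and consequently the tensor `skewTensor m` has no real
eigenpair. -/
theorem no_real_eigenpair (m : ℕ) (hm : 2 ≤ m) (hme : Even m) :
    (∀ x₁ x₂ lam : ℝ, x₂ ^ (m - 1) = lam * x₁ → -x₁ ^ (m - 1) = lam * x₂ →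
      x₁ = 0 ∧ x₂ = 0) ∧
    ¬ ∃ (lam : ℝ) (x : Fin 2 → ℝ), x ≠ 0 ∧ tApplyR m 2 (skewTensor m) x = lam • x := by
  have key : ∀ x₁ x₂ lam : ℝ, x₂ ^ (m - 1) = lam * x₁ → -x₁ ^ (m - 1) = lam * x₂ →
      x₁ = 0 ∧ x₂ = 0 := by
    intro x₁ x₂ lam h1 h2
    have hm1 : m - 1 + 1 = m := by omega
    have h3 : x₂ ^ m = lam * x₁ * x₂ := by
      rw [← hm1, pow_succ, h1]
    have h4 : -(x₁ ^ m) = lam * x₂ * x₁ := by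
      rw [← hm1, pow_succ, ← neg_mul, h2]
    have p1 : 0 ≤ x₁ ^ m := hme.pow_nonneg x₁
    have p2 : 0 ≤ x₂ ^ m := hme.pow_nonneg x₂
    have hx1 : x₁ ^ m = 0 := by nlinarith
    have hx2 : x₂ ^ m = 0 := by nlinarith
    exact ⟨pow_eq_zero_iff (by omega) |>.mp hx1, pow_eq_zero_iff (by omega) |>.mp hx2⟩
  refine ⟨key, ?_⟩
  rintro ⟨lam, x, hx, heq⟩
  have e0 : tApplyR m 2 (skewTensor m) x 0 = x 1 ^ (m - 1) := by
    unfold tApplyR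
    rw [Finset.sum_eq_single_of_mem (fun _ : Fin (m - 1) => (1 : Fin 2)) (mem_univ _)]
    · rw [skew_eval0 m hm (fun _ => 1), if_pos rfl, one_mul, Finset.prod_const,
        Finset.card_univ, Fintype.card_fin]
    · intro b _ hb
      rw [skew_eval0 m hm b, if_neg hb, zero_mul]
  have e1 : tApplyR m 2 (skewTensor m) x 1 = -(x 0 ^ (m - 1)) := by
    unfold tApplyR
    rw [Finset.sum_eq_single_of_mem (fun _ : Fin (m - 1) => (0 : Fin 2)) (mem_univ _)]
    · rw [skew_eval1 m hm (fun _ => 0), if_pos rfl, neg_one_mul, Finset.prod_const,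
        Finset.card_univ, Fintype.card_fin]
    · intro b _ hb
      rw [skew_eval1 m hm b, if_neg hb, zero_mul]
  have h1 : x 1 ^ (m - 1) = lam * x 0 := by
    rw [← e0, heq]; simp
  have h2 : -(x 0 ^ (m - 1)) = lam * x 1 := by
    rw [← e1, heq]; simp
  obtain ⟨a, b⟩ := key (x 0) (x 1) lam h1 h2
  apply hx
  funext j
  fin_cases j <;> simpa
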